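/- Let k ≥ 1 be an integer, let n = 20k + 1 and s = n − 10. Then HOP(2^⟨s⟩, 4, 8, 8) has a solution, i.e., HOP(2^⟨s⟩, 2m_1, 2m_2, 2m_3) has a solution with (m_1, m_2, m_3) = (2, 4, 4). (In the paper this is stated as: 4K_n^• admits an HOP (C_2, C_4, C_4)-decomposition, which by the paper's Theorem 3.2 is equivalent to the stated HOP solution.) -/

import Mathlib

/-- The vertex set of the complete graph `K_{2n}`: the `n` couples are indexed by `Fin n`,
and the two members of a couple by `Fin 2`. -/
abbrev HOPVertex (n : ℕ) : Type := Fin n × Fin 2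

/-- The spouse of a participant: the other member of the same couple. -/
def HOPspouse {n : ℕ} (v : HOPVertex n) : HOPVertex n := (v.1, v.2 + 1)

/-- An edge of `K_{2n}` is an `I`-edge (an edge of the distinguished perfect matching `I`)
if it joins a participant to their spouse. -/
def IsIEdge {n : ℕ} (e : Sym2 (HOPVertex n)) : Prop :=
  ∃ v, e = s(v, HOPspouse v)

/-- An `I`-alternating `(K_2^⟨s⟩, C_{2m_1}, …, C_{2m_t})`-factor of `K_{2n}`:
a spanning subgraph of `K_{2n}` which is a vertex-disjoint union of `s` edges of `I`
(one for each `a : Fin s`, namely the edge joining `pair a` to its spouse) together with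
`t` cycles, the `i`-th of which has length `2 * m i` (given by the cyclic vertex sequence
`cyc i : ZMod (2 * m i) → HOPVertex n`), such that along each cycle the edges alternate
between `I`-edges (at even positions) and non-`I`-edges (at odd positions).
The field `spanning` says that the listed vertices are pairwise distinct and exhaust the
whole vertex set; in particular each `cyc i` is injective, so it really traces a cycle. -/
structure HOPFactor (n s t : ℕ) (m : Fin t → ℕ) : Type where
  pair : Fin s → HOPVertex n
  cyc : (i : Fin t) → ZMod (2 * m i) → HOPVertex n
  alt_even : ∀ (i : Fin t) (j : ZMod (2 * m i)),
      j.val % 2 = 0 → cyc i (j + 1) = HOPspouse (cyc i j)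
  alt_odd : ∀ (i : Fin t) (j : ZMod (2 * m i)),
      j.val % 2 = 1 → ¬ IsIEdge s(cyc i j, cyc i (j + 1))
  spanning : Function.Bijective
      (Sum.elim
        (fun a : Fin s × Fin 2 => if a.2 = 0 then pair a.1 else HOPspouse (pair a.1))
        (fun x : (i : Fin t) × ZMod (2 * m i) => cyc x.1 x.2))

/-- The edge set of an `I`-alternating `(K_2^⟨s⟩, C_{2m_1}, …, C_{2m_t})`-factor. -/
def HOPFactor.edges {n s t : ℕ} {m : Fin t → ℕ} (F : HOPFactor n s t m) :
    Set (Sym2 (HOPVertex n)) :=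
  {e | (∃ a : Fin s, e = s(F.pair a, HOPspouse (F.pair a))) ∨
    ∃ (i : Fin t) (j : ZMod (2 * m i)), e = s(F.cyc i j, F.cyc i (j + 1))}

/-- A solution to the generalized Honeymoon Oberwolfach Problem
`HOP(2^⟨s⟩, 2 m_1, …, 2 m_t)`: a family of `γ` `I`-alternating
`(K_2^⟨s⟩, C_{2m_1}, …, C_{2m_t})`-factors of `K_{2n}`, where `γ` is the natural number
with `γ * (m_1 + ⋯ + m_t) = 2n(n-1)`, such that every edge of `K_{2n}` that is not an
`I`-edge lies in exactly one factor of the family. -/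
def HOPSolution (n s t : ℕ) (m : Fin t → ℕ) : Prop :=
  ∃ γ : ℕ, γ * (∑ i, m i) = 2 * n * (n - 1) ∧
    ∃ F : Fin γ → HOPFactor n s t m,
      ∀ e : Sym2 (HOPVertex n), ¬ e.IsDiag → ¬ IsIEdge e →
        ∃! k : Fin γ, e ∈ (F k).edges



namespace HOP69

open Fin.NatCast

/-- number of couples -/
abbrev N (k : ℕ) : ℕ := 20 * k + 1

/-- successor slot around the cycles: slots 0-3 form a 4-cycle, 4-7 a 4-cycle, 8-9 a 2-cycle -/
def nxt (u : ℕ) : ℕ := [1,2,3,0,5,6,7,4,9,8].getD u 0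

/-- member labels at each slot, for each of the 4 variants -/
def Alab (v : Fin 4) (u : ℕ) : Fin 2 :=
  [![0,0,0,0,0,0,0,0,0,0],
   ![1,1,1,1,1,1,1,1,0,1],
   ![0,1,0,1,0,1,0,1,0,0],
   ![1,0,1,0,1,0,1,0,0,1]].getD v.val ![0,0,0,0,0,0,0,0,0,0] (Fin.ofNat 10 u)

/-- couple offsets for the ten slots (base rotation), depending on block `j` and variant `v` -/
def Toff (j : ℕ) (v : Fin 4) (u : ℕ) : ℕ :=
  [0, 10*j+1, 20*j+5, 10*j+3, 2, 10*j+7, 20*j+15, 10*j+8, 10*j+4, 20*j+13 + v.val/2].getD u 0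

/-- reduced difference of the edge leaving slot `u` (in `1..10`) -/
def dd0 (v : Fin 4) (u : ℕ) : ℕ :=
  [1, 4, 2, 3, 5, 8, 7, 6, 9 + v.val/2, 9 + v.val/2].getD u 0

/-- actual difference -/
def ddf (j : ℕ) (v : Fin 4) (u : ℕ) : ℕ := 10*j + dd0 v u

/-- whether the edge leaving slot `u` goes up (`Toff (nxt u) = Toff u + ddf`) or down -/
def ascl (u : ℕ) : Bool := [true,true,false,false,true,true,false,false,true,false].getD u true

/-- ordered labels of the edge leaving slot `u`: (label at lower couple, label at higher couple) -/
def L (v : Fin 4) (u : ℕ) : Fin 2 × Fin 2 :=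
  if ascl u then (Alab v u + 1, Alab v (nxt u)) else (Alab v (nxt u), Alab v u + 1)

lemma key_surj : ∀ (c : Fin 10) (ab : Fin 2 × Fin 2),
    ∃ (v : Fin 4) (u : Fin 10), dd0 v u.val = c.val + 1 ∧ L v u.val = ab := by decide

lemma key_inj : ∀ (v v' : Fin 4) (u u' : Fin 10),
    dd0 v u.val = dd0 v' u'.val → L v u.val = L v' u'.val → v = v' ∧ u = u' := by decide

lemma nxt_lt (u : ℕ) (hu : u < 10) : nxt u < 10 := by
  interval_cases u <;> simp [nxt]

lemma nxt_ne (u : ℕ) (hu : u < 10) : nxt u ≠ u := by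
  interval_cases u <;> simp [nxt]

lemma toff_lt {k j : ℕ} (hj : j < k) (v : Fin 4) (u : ℕ) :
    Toff j v u < N k := by
  have := v.isLt
  rcases Nat.lt_or_ge u 10 with hu | hu
  · interval_cases u <;> simp [Toff, N] <;> omega
  · rw [Toff, List.getD_eq_default] <;> simp [N] <;> omega

lemma toff_inj {j : ℕ} {v : Fin 4} {u1 u2 : ℕ} (h1 : u1 < 10) (h2 : u2 < 10)
    (h : Toff j v u1 = Toff j v u2) : u1 = u2 := by
  have := v.isLt
  interval_cases u1 <;> interval_cases u2 <;> simp_all [Toff] <;> omega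

lemma toff_succ_asc (j : ℕ) (v : Fin 4) (u : ℕ) (hu : u < 10) (h : ascl u = true) :
    Toff j v (nxt u) = Toff j v u + ddf j v u := by
  have := v.isLt
  interval_cases u <;> simp_all [Toff, ddf, dd0, nxt, ascl] <;> omega

lemma toff_succ_desc (j : ℕ) (v : Fin 4) (u : ℕ) (hu : u < 10) (h : ascl u = false) :
    Toff j v u = Toff j v (nxt u) + ddf j v u := by
  have := v.isLt
  interval_cases u <;> simp_all [Toff, ddf, dd0, nxt, ascl] <;> omega

lemma dd_bounds (j : ℕ) (v : Fin 4) (u : ℕ) (hu : u < 10) :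
    10*j + 1 ≤ ddf j v u ∧ ddf j v u ≤ 10*j + 10 := by
  have := v.isLt
  interval_cases u <;> simp [ddf, dd0] <;> omega



/-- cycle sizes (in couples) -/
def msz (i : Fin 3) : ℕ := [2,4,4].getD i.val 0
/-- first slot of each cycle -/
def bas (i : Fin 3) : ℕ := [8,0,4].getD i.val 0
/-- the slot of the `q`-th couple of cycle `i` -/
def gslot (i : Fin 3) (q : ℕ) : ℕ := bas i + q % msz i

lemma mvec_eq : ∀ i : Fin 3, (![2,4,4] : Fin 3 → ℕ) i = msz i := by decide

lemma msz_ge : ∀ i : Fin 3, 2 ≤ msz i := by decide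

lemma gslot_lt (i : Fin 3) (q : ℕ) : gslot i q < 10 := by
  have h : q % msz i < msz i := Nat.mod_lt _ (by have := msz_ge i; omega)
  obtain ⟨iv, hi⟩ := i
  interval_cases iv <;> simp only [gslot, bas, msz] at h ⊢ <;> simp at h ⊢ <;> omega

lemma gslot_mod (i : Fin 3) (q : ℕ) : gslot i (q % msz i) = gslot i q := by
  simp [gslot, Nat.mod_mod_of_dvd q (dvd_refl (msz i))]

lemma nxt_gslot_aux : ∀ (i : Fin 3) (t : Fin (msz i)),
    nxt (bas i + t.val) = bas i + (t.val + 1) % msz i := by decide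

lemma nxt_gslot (i : Fin 3) (q : ℕ) : nxt (gslot i q) = gslot i (q + 1) := by
  have hm := msz_ge i
  have hp : 0 < msz i := by omega
  have h := nxt_gslot_aux i ⟨q % msz i, Nat.mod_lt q hp⟩
  simp only [gslot] at h ⊢
  rw [h, Nat.add_mod q 1, Nat.mod_eq_of_lt (by omega : 1 < msz i)]

lemma gslot_inj_aux : ∀ (i i' : Fin 3) (t : Fin (msz i)) (t' : Fin (msz i')),
    bas i + t.val = bas i' + t'.val → i = i' ∧ t.val = t'.val := by decide

lemma gslot_inj {i i' : Fin 3} {q q' : ℕ} (hq : q < msz i) (hq' : q' < msz i')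
    (h : gslot i q = gslot i' q') : i = i' ∧ q = q' := by
  have := gslot_inj_aux i i' ⟨q, hq⟩ ⟨q', hq'⟩
    (by simpa [gslot, Nat.mod_eq_of_lt hq, Nat.mod_eq_of_lt hq'] using h)
  exact this

lemma gslot_surj : ∀ u : Fin 10, ∃ (i : Fin 3) (t : Fin (msz i)),
    bas i + t.val = u.val := by decide

instance inst2m (i : Fin 3) : NeZero ((2 : ℕ) * ![2,4,4] i) :=
  ⟨by rw [mvec_eq]; have := msz_ge i; omega⟩

instance instNk (k : ℕ) : NeZero (N k) := ⟨by simp [N]⟩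

/-- couples used by the cycles -/
def C {k : ℕ} (j : ℕ) (v : Fin 4) (r : ZMod (N k)) (u : ℕ) : ZMod (N k) :=
  r + (Toff j v u : ZMod (N k))

lemma cast_nat_inj {k : ℕ} {a b : ℕ} (ha : a < N k) (hb : b < N k)
    (h : (a : ZMod (N k)) = (b : ZMod (N k))) : a = b := by
  have := congrArg ZMod.val h
  rwa [ZMod.val_cast_of_lt ha, ZMod.val_cast_of_lt hb] at this

lemma C_inj {k j : ℕ} {v : Fin 4} {r : ZMod (N k)} (hj : j < k) {u1 u2 : ℕ}
    (h1 : u1 < 10) (h2 : u2 < 10) (h : C j v r u1 = C j v r u2) : u1 = u2 := by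
  apply toff_inj h1 h2 (v := v) (j := j)
  have h' := add_left_cancel h
  exact cast_nat_inj (toff_lt hj v u1) (toff_lt hj v u2) h'

/-- the cycle vertex functions of a factor -/
def cycF {k : ℕ} (j : ℕ) (v : Fin 4) (r : ZMod (N k)) (i : Fin 3)
    (z : ZMod (2 * ![2,4,4] i)) : HOPVertex (N k) :=
  (C j v r (gslot i (z.val / 2)), Alab v (gslot i (z.val / 2)) + ((z.val % 2 : ℕ) : Fin 2))

lemma nat_succ_odd {M m t : ℕ} (hM : M = 2*m) (ht : t % 2 = 1) :
    (t+1) % M = 2 * ((t/2 + 1) % m) := by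
  subst hM
  rw [show t+1 = 2*(t/2+1) by omega, Nat.mul_mod_mul_left]

section evals
variable {k : ℕ} (j : ℕ) (v : Fin 4) (r : ZMod (N k)) (i : Fin 3)
  (z : ZMod (2 * ![2,4,4] i))

lemma val_succ : (z + 1).val = (z.val + 1) % (2 * ![2,4,4] i) := by
  haveI : Fact (1 < 2 * ![2,4,4] i) := ⟨by rw [mvec_eq]; have := msz_ge i; omega⟩
  rw [ZMod.val_add, ZMod.val_one]

lemma cycF_even (h : z.val % 2 = 0) :
    cycF j v r i z = (C j v r (gslot i (z.val / 2)), Alab v (gslot i (z.val / 2))) := by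
  simp [cycF, h]; rfl

lemma cycF_odd (h : z.val % 2 = 1) :
    cycF j v r i z = (C j v r (gslot i (z.val / 2)), Alab v (gslot i (z.val / 2)) + 1) := by
  simp [cycF, h]; rfl

lemma cycF_succ_even (h : z.val % 2 = 0) :
    cycF j v r i (z + 1)
      = (C j v r (gslot i (z.val / 2)), Alab v (gslot i (z.val / 2)) + 1) := by
  have hA : (2:ℕ) * ![2,4,4] i = 2 * msz i := by rw [mvec_eq]
  have hlt := ZMod.val_lt z
  have hm := msz_ge i
  have e1 : (z + 1).val = z.val + 1 := by
    rw [val_succ, Nat.mod_eq_of_lt (by omega)]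
  have e2 : (z.val + 1) / 2 = z.val / 2 := by omega
  have e3 : (z.val + 1) % 2 = 1 := by omega
  simp [cycF, e1, e2, e3]; rfl

lemma cycF_succ_odd (h : z.val % 2 = 1) :
    cycF j v r i (z + 1)
      = (C j v r (nxt (gslot i (z.val / 2))), Alab v (nxt (gslot i (z.val / 2)))) := by
  have hA : (2:ℕ) * ![2,4,4] i = 2 * msz i := by rw [mvec_eq]
  have hlt := ZMod.val_lt z
  have hm := msz_ge i
  have e1 : (z + 1).val = 2 * ((z.val / 2 + 1) % msz i) := by
    rw [val_succ]; exact nat_succ_odd hA h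
  have e2 : (z + 1).val / 2 = (z.val / 2 + 1) % msz i := by omega
  have e3 : (z + 1).val % 2 = 0 := by omega
  have e4 : gslot i ((z.val / 2 + 1) % msz i) = nxt (gslot i (z.val / 2)) := by
    rw [gslot_mod, nxt_gslot]
  simp [cycF, e2, e3, e4]; rfl

end evals

lemma isIEdge_fst {n : ℕ} {P Q : HOPVertex n} (h : IsIEdge s(P, Q)) : P.1 = Q.1 := by
  obtain ⟨w, hw⟩ := h
  rw [Sym2.eq_iff] at hw
  rcases hw with ⟨h1, h2⟩ | ⟨h1, h2⟩ <;> subst h1 <;> subst h2 <;> rfl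

section factorpart
variable {k : ℕ}

def usedS (j : ℕ) (v : Fin 4) (r : ZMod (N k)) : Finset (ZMod (N k)) :=
  (Finset.range 10).image (fun u => C j v r u)

lemma mem_usedS {j : ℕ} {v : Fin 4} {r : ZMod (N k)} {u : ℕ} (hu : u < 10) :
    C j v r u ∈ usedS j v r :=
  Finset.mem_image.2 ⟨u, Finset.mem_range.2 hu, rfl⟩

lemma card_usedS (j : ℕ) (v : Fin 4) (r : ZMod (N k)) (hj : j < k) :
    (usedS j v r).card = 10 := by
  rw [usedS, Finset.card_image_of_injOn, Finset.card_range]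
  intro u1 h1 u2 h2 h
  exact C_inj hj (Finset.mem_range.1 h1) (Finset.mem_range.1 h2) h

def restS (j : ℕ) (v : Fin 4) (r : ZMod (N k)) : Finset (ZMod (N k)) := (usedS j v r)ᶜ

lemma card_restS (j : ℕ) (v : Fin 4) (r : ZMod (N k)) (hj : j < k) :
    (restS j v r).card = N k - 10 := by
  rw [restS, Finset.card_compl, card_usedS j v r hj, ZMod.card]

/-- the couples used for the 2-person tables -/
noncomputable def pairC (j : Fin k) (v : Fin 4) (r : ZMod (N k)) (a : Fin (N k - 10)) : ZMod (N k) :=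
  ((restS j.1 v r).equivFin.symm (finCongr (card_restS j.1 v r j.2).symm a) : _)

lemma pairC_inj (j : Fin k) (v : Fin 4) (r : ZMod (N k)) :
    Function.Injective (pairC j v r) :=
  Subtype.val_injective.comp
    ((restS j.1 v r).equivFin.symm.injective.comp (finCongr _).injective)

lemma pairC_mem (j : Fin k) (v : Fin 4) (r : ZMod (N k)) (a : Fin (N k - 10)) :
    pairC j v r a ∈ restS j.1 v r :=
  Subtype.coe_prop _

lemma pairC_not_used (j : Fin k) (v : Fin 4) (r : ZMod (N k)) (a : Fin (N k - 10))
    {u : ℕ} (hu : u < 10) : pairC j v r a ≠ C j.1 v r u := by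
  intro h
  have hmem := pairC_mem j v r a
  rw [restS, Finset.mem_compl] at hmem
  exact hmem (h ▸ mem_usedS hu)

lemma natCast_fin2_inj {a b : ℕ} (ha : a < 2) (hb : b < 2)
    (h : ((a : ℕ) : Fin 2) = (b : Fin 2)) : a = b := by
  interval_cases a <;> interval_cases b <;> simp_all

/-- the combinatorial factor -/
noncomputable def theFactor (k : ℕ) (j : Fin k) (v : Fin 4) (r : ZMod (N k)) :
    HOPFactor (N k) (N k - 10) 3 ![2,4,4] where
  pair a := (pairC j v r a, 0)
  cyc := cycF j.1 v r
  alt_even i z h := by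
    rw [cycF_succ_even _ _ _ _ _ h, cycF_even _ _ _ _ _ h]; rfl
  alt_odd i z h := by
    rw [cycF_succ_odd _ _ _ _ _ h, cycF_odd _ _ _ _ _ h]
    intro hI
    have hfst := isIEdge_fst hI
    have h10 := gslot_lt i (z.val / 2)
    have heq : gslot i (z.val / 2) = nxt (gslot i (z.val / 2)) :=
      C_inj j.2 h10 (nxt_lt _ h10) hfst
    exact nxt_ne _ h10 heq.symm
  spanning := by
    rw [Fintype.bijective_iff_injective_and_card]
    constructor
    · rintro (⟨a, b⟩ | ⟨i, z⟩) (⟨a', b'⟩ | ⟨i', z'⟩) h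
      · -- pair / pair
        simp only [Sum.elim_inl] at h
        fin_cases b <;> fin_cases b' <;>
          simp_all [HOPspouse, Prod.ext_iff] <;>
          exact pairC_inj j v r h
      · -- pair / cyc
        exfalso
        simp only [Sum.elim_inl, Sum.elim_inr] at h
        have hfst := congrArg Prod.fst h
        have h10 := gslot_lt i' (z'.val / 2)
        fin_cases b <;> simp [HOPspouse, cycF] at hfst <;>
          exact pairC_not_used j v r a h10 hfst
      · -- cyc / pair
        exfalso
        simp only [Sum.elim_inl, Sum.elim_inr] at h
        have hfst := congrArg Prod.fst h
        have h10 := gslot_lt i (z.val / 2)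
        fin_cases b' <;> simp [HOPspouse, cycF] at hfst <;>
          exact pairC_not_used j v r a' h10 hfst.symm
      · -- cyc / cyc
        simp only [Sum.elim_inr] at h
        have hA : (2:ℕ) * ![2,4,4] i = 2 * msz i := by rw [mvec_eq]
        have hA' : (2:ℕ) * ![2,4,4] i' = 2 * msz i' := by rw [mvec_eq]
        have hz := ZMod.val_lt z
        have hz' := ZMod.val_lt z'
        have hfst := congrArg Prod.fst h
        have hsnd := congrArg Prod.snd h
        simp only [cycF] at hfst hsnd
        have hq : z.val / 2 < msz i := by omega
        have hq' : z'.val / 2 < msz i' := by omega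
        have hgs : gslot i (z.val / 2) = gslot i' (z'.val / 2) :=
          C_inj j.2 (gslot_lt _ _) (gslot_lt _ _) hfst
        obtain ⟨hii, hqq⟩ := gslot_inj hq hq' hgs
        subst hii
        simp only [hqq] at hsnd
        have hpar := add_left_cancel hsnd
        have : z.val % 2 = z'.val % 2 :=
          natCast_fin2_inj (Nat.mod_lt _ two_pos) (Nat.mod_lt _ two_pos) hpar
        have : z.val = z'.val := by omega
        have : z = z' := ZMod.val_injective _ this
        subst this
        rfl
    · simp only [Fintype.card_sum, Fintype.card_prod, Fintype.card_sigma,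
        Fintype.card_fin, ZMod.card, Fin.sum_univ_three]
      have h0 : (![2,4,4] : Fin 3 → ℕ) 0 = 2 := rfl
      have h1 : (![2,4,4] : Fin 3 → ℕ) 1 = 4 := rfl
      have h2 : (![2,4,4] : Fin 3 → ℕ) 2 = 4 := rfl
      rw [h0, h1, h2]
      simp [N]
      have hj2 := j.2
      omega

end factorpart

section edgespart
variable {k : ℕ}

/-- the non-`I` edge leaving slot `u` -/
def EdgeAt (j : ℕ) (v : Fin 4) (r : ZMod (N k)) (u : ℕ) : Sym2 (HOPVertex (N k)) :=
  s((C j v r u, Alab v u + 1), (C j v r (nxt u), Alab v (nxt u)))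

lemma edgeAt_eq (j : ℕ) (v : Fin 4) (r : ZMod (N k)) (i : Fin 3)
    (z : ZMod (2 * ![2,4,4] i)) (h : z.val % 2 = 1) :
    s(cycF j v r i z, cycF j v r i (z + 1)) = EdgeAt j v r (gslot i (z.val / 2)) := by
  rw [cycF_odd _ _ _ _ _ h, cycF_succ_odd _ _ _ _ _ h]; rfl

lemma theFactor_cyc (j : Fin k) (v : Fin 4) (r : ZMod (N k)) :
    (theFactor k j v r).cyc = cycF j.1 v r := rfl

lemma mem_edges_iff (j : Fin k) (v : Fin 4) (r : ZMod (N k))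
    {e : Sym2 (HOPVertex (N k))} (he : ¬ IsIEdge e) :
    e ∈ (theFactor k j v r).edges ↔ ∃ u, u < 10 ∧ e = EdgeAt j.1 v r u := by
  constructor
  · intro hm
    rcases hm with ⟨a, ha⟩ | ⟨i, z, hz⟩
    · exact absurd ⟨_, ha⟩ he
    · rcases Nat.mod_two_eq_zero_or_one z.val with h | h
      · exact absurd (by rw [hz, (theFactor k j v r).alt_even i z h]; exact ⟨_, rfl⟩) he
      · refine ⟨gslot i (z.val / 2), gslot_lt _ _, ?_⟩
        rw [hz, theFactor_cyc]
        exact edgeAt_eq j.1 v r i z h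
  · rintro ⟨u, hu, rfl⟩
    obtain ⟨i, t, hit⟩ := gslot_surj ⟨u, hu⟩
    right
    have hA : (2:ℕ) * ![2,4,4] i = 2 * msz i := by rw [mvec_eq]
    have ht2 := t.2
    have hlt : 2 * t.val + 1 < 2 * ![2,4,4] i := by omega
    refine ⟨i, ((2 * t.val + 1 : ℕ) : ZMod (2 * ![2,4,4] i)), ?_⟩
    have hval : ((2 * t.val + 1 : ℕ) : ZMod (2 * ![2,4,4] i)).val = 2 * t.val + 1 :=
      ZMod.val_cast_of_lt hlt
    have hodd : ((2 * t.val + 1 : ℕ) : ZMod (2 * ![2,4,4] i)).val % 2 = 1 := by omega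
    rw [theFactor_cyc, edgeAt_eq j.1 v r i _ hodd]
    have hq : ((2 * t.val + 1 : ℕ) : ZMod (2 * ![2,4,4] i)).val / 2 = t.val := by omega
    rw [hq]
    have : gslot i t.val = u := by
      rw [gslot, Nat.mod_eq_of_lt ht2, hit]
    rw [this]

end edgespart

lemma main_oriented (k : ℕ) (X Y : ZMod (N k)) (a b : Fin 2)
    (h1 : 1 ≤ (Y - X).val) (h2 : (Y - X).val ≤ 10 * k) :
    ∃! p : Fin k × Fin 4 × ZMod (N k),
      (s((X, a), (Y, b)) : Sym2 (HOPVertex (N k)))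
        ∈ (theFactor k p.1 p.2.1 p.2.2).edges := by
  have hNval : N k = 20 * k + 1 := rfl
  set d := (Y - X).val with hd
  have hk : 1 ≤ k := by omega
  have hXY : X ≠ Y := by
    intro h
    have hz : d = 0 := by rw [hd, h, sub_self, ZMod.val_zero]
    omega
  have he : ¬ IsIEdge (s((X, a), (Y, b)) : Sym2 (HOPVertex (N k))) :=
    fun hI => hXY (isIEdge_fst hI)
  have hj0 : (d - 1) / 10 < k := by omega
  set j0 : Fin k := ⟨(d - 1) / 10, hj0⟩ with hj0def
  obtain ⟨v, u, hdd0, hLvu⟩ := key_surj ⟨(d - 1) % 10, by omega⟩ (a, b)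
  have hu10 : u.val < 10 := u.2
  have hc0val : (⟨(d - 1) % 10, by omega⟩ : Fin 10).val = (d - 1) % 10 := rfl
  rw [hc0val] at hdd0
  have hj0val : j0.val = (d - 1) / 10 := rfl
  have hddf : ddf j0.1 v u.val = d := by rw [ddf, hdd0, hj0val]; omega
  have hcast : ((d : ℕ) : ZMod (N k)) = Y - X := by
    rw [hd]; exact ZMod.natCast_rightInverse _
  set lo := if ascl u.val then u.val else nxt u.val with hlo
  set r : ZMod (N k) := X - (Toff j0.1 v lo : ZMod (N k)) with hr
  refine ⟨(j0, v, r), ?_, ?_⟩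
  · -- membership
    show (s((X, a), (Y, b)) : Sym2 (HOPVertex (N k))) ∈ (theFactor k j0 v r).edges
    rw [mem_edges_iff j0 v r he]
    refine ⟨u.val, hu10, ?_⟩
    by_cases hasc : ascl u.val = true
    · have hT := toff_succ_asc j0.1 v u.val hu10 hasc
      have hXC : C j0.1 v r u.val = X := by
        rw [C, hr, hlo, if_pos hasc]; ring
      have hYC : C j0.1 v r (nxt u.val) = Y := by
        rw [C, hT]; push_cast
        rw [hr, hlo, if_pos hasc, hddf, hcast]; ring
      have hab : (Alab v u.val + 1, Alab v (nxt u.val)) = (a, b) := by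
        rw [← hLvu, L, if_pos hasc]
      rw [EdgeAt, hXC, hYC]
      rw [Prod.mk.injEq] at hab
      rw [hab.1, hab.2]
    · rw [Bool.not_eq_true] at hasc
      have hT := toff_succ_desc j0.1 v u.val hu10 hasc
      have hXC : C j0.1 v r (nxt u.val) = X := by
        rw [C, hr, hlo, if_neg (by simp [hasc])]; ring
      have hYC : C j0.1 v r u.val = Y := by
        rw [C, hT]; push_cast
        rw [hr, hlo, if_neg (by simp [hasc]), hddf, hcast]; ring
      have hab : (Alab v (nxt u.val), Alab v u.val + 1) = (a, b) := by
        rw [← hLvu, L, if_neg (by simp [hasc])]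
      rw [EdgeAt, hXC, hYC]
      rw [Prod.mk.injEq] at hab
      rw [hab.1, hab.2]
      exact Sym2.eq_swap
  · -- uniqueness
    rintro ⟨j', v', r'⟩ hmem0
    have hmem : (s((X, a), (Y, b)) : Sym2 (HOPVertex (N k)))
        ∈ (theFactor k j' v' r').edges := hmem0
    rw [mem_edges_iff j' v' r' he] at hmem
    obtain ⟨u', hu', hE⟩ := hmem
    rw [EdgeAt, Sym2.eq_iff] at hE
    have hbounds' := dd_bounds j'.1 v' u' hu'
    have hbounds0 := dd_bounds j0.1 v u.val hu10
    have hj'2 := j'.2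
    have hdN' : ddf j'.1 v' u' < N k := by omega
    have hvalddf : ((ddf j'.1 v' u' : ℕ) : ZMod (N k)).val = ddf j'.1 v' u' :=
      ZMod.val_cast_of_lt hdN'
    have hne0 : ((ddf j'.1 v' u' : ℕ) : ZMod (N k)) ≠ 0 := by
      intro h0; rw [h0, ZMod.val_zero] at hvalddf; omega
    rcases hE with ⟨hP, hQ⟩ | ⟨hP, hQ⟩ <;>
      replace hP := Prod.mk.inj hP <;> replace hQ := Prod.mk.inj hQ <;>
      obtain ⟨hX1, ha1⟩ := hP <;> obtain ⟨hY1, hb1⟩ := hQ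
    · -- forward match
      by_cases hasc' : ascl u' = true
      · have hT := toff_succ_asc j'.1 v' u' hu' hasc'
        have hYX : Y - X = ((ddf j'.1 v' u' : ℕ) : ZMod (N k)) := by
          rw [hX1, hY1]; simp only [C]; rw [hT]; push_cast; ring
        have hdval : d = ddf j'.1 v' u' := by rw [hd, hYX, hvalddf]
        simp only [ddf] at hdval hddf hbounds' hbounds0
        have hj' : j'.1 = j0.1 := by omega
        have hjj : j' = j0 := Fin.val_injective hj'
        have hdd0eq : dd0 v' u' = dd0 v u.val := by omega
        have hL' : L v' u' = (a, b) := by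
          rw [L, if_pos hasc', ha1, hb1]
        obtain ⟨hvv, huu⟩ := key_inj v' v ⟨u', hu'⟩ u hdd0eq (by rw [hL', hLvu])
        have hu'u : u' = u.val := congrArg Fin.val huu
        have hr' : r' = r := by
          have hadd : r' + (Toff j'.1 v' u' : ZMod (N k)) = X := by
            rw [hX1]; rfl
          have := eq_sub_of_add_eq hadd
          rw [this, hr, hlo, if_pos (by rw [← hu'u]; exact hasc'), hjj, hvv, hu'u]
        rw [hjj, hvv, hr']
      · rw [Bool.not_eq_true] at hasc'
        exfalso
        have hT := toff_succ_desc j'.1 v' u' hu' hasc'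
        have hYX : Y - X = -((ddf j'.1 v' u' : ℕ) : ZMod (N k)) := by
          rw [hX1, hY1]; simp only [C]; rw [hT]; push_cast; ring
        have hdval : d = N k - ddf j'.1 v' u' := by
          rw [hd, hYX, ZMod.neg_val, if_neg hne0, hvalddf]
        omega
    · -- swapped match
      by_cases hasc' : ascl u' = true
      · exfalso
        have hT := toff_succ_asc j'.1 v' u' hu' hasc'
        have hYX : Y - X = -((ddf j'.1 v' u' : ℕ) : ZMod (N k)) := by
          rw [hX1, hY1]; simp only [C]; rw [hT]; push_cast; ring
        have hdval : d = N k - ddf j'.1 v' u' := by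
          rw [hd, hYX, ZMod.neg_val, if_neg hne0, hvalddf]
        omega
      · rw [Bool.not_eq_true] at hasc'
        have hT := toff_succ_desc j'.1 v' u' hu' hasc'
        have hYX : Y - X = ((ddf j'.1 v' u' : ℕ) : ZMod (N k)) := by
          rw [hX1, hY1]; simp only [C]; rw [hT]; push_cast; ring
        have hdval : d = ddf j'.1 v' u' := by rw [hd, hYX, hvalddf]
        simp only [ddf] at hdval hddf hbounds' hbounds0
        have hj' : j'.1 = j0.1 := by omega
        have hjj : j' = j0 := Fin.val_injective hj'
        have hdd0eq : dd0 v' u' = dd0 v u.val := by omega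
        have hL' : L v' u' = (a, b) := by
          rw [L, if_neg (by simp [hasc']), ha1, hb1]
        obtain ⟨hvv, huu⟩ := key_inj v' v ⟨u', hu'⟩ u hdd0eq (by rw [hL', hLvu])
        have hu'u : u' = u.val := congrArg Fin.val huu
        have hr' : r' = r := by
          have hadd : r' + (Toff j'.1 v' (nxt u') : ZMod (N k)) = X := by
            rw [hX1]; rfl
          have := eq_sub_of_add_eq hadd
          rw [this, hr, hlo, if_neg (by rw [← hu'u]; simp [hasc']), hjj, hvv, hu'u]
        rw [hjj, hvv, hr']

lemma main (k : ℕ) (hk : 1 ≤ k) (e : Sym2 (HOPVertex (N k))) (hdg : ¬ e.IsDiag)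
    (hI : ¬ IsIEdge e) :
    ∃! p : Fin k × Fin 4 × ZMod (N k), e ∈ (theFactor k p.1 p.2.1 p.2.2).edges := by
  induction e using Sym2.ind with
  | _ P Q =>
  obtain ⟨X0, a⟩ := P
  obtain ⟨Y0, b⟩ := Q
  have hXYf : X0 ≠ Y0 := by
    intro h
    by_cases hab : a = b
    · exact hdg (by rw [Sym2.mk_isDiag_iff]; exact Prod.ext h hab)
    · have hb1 : b = a + 1 := by omega
      exact hI ⟨(X0, a), by subst h; rw [hb1]; rfl⟩
  set X : ZMod (N k) := X0 with hX
  set Y : ZMod (N k) := Y0 with hY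
  have hXY : X ≠ Y := hXYf
  have hsub : Y - X ≠ 0 := sub_ne_zero.mpr (Ne.symm hXY)
  have hsub' : X - Y ≠ 0 := sub_ne_zero.mpr hXY
  have h1 : 1 ≤ (Y - X).val :=
    Nat.pos_of_ne_zero (by simpa [ZMod.val_eq_zero] using hsub)
  have h1' : 1 ≤ (X - Y).val :=
    Nat.pos_of_ne_zero (by simpa [ZMod.val_eq_zero] using hsub')
  have hvneg : (X - Y).val = N k - (Y - X).val := by
    rw [show X - Y = -(Y - X) from (neg_sub Y X).symm, ZMod.neg_val, if_neg hsub]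
  have hvlt := ZMod.val_lt (Y - X)
  have hNval : N k = 20 * k + 1 := rfl
  rcases le_or_gt ((Y - X).val) (10 * k) with hle | hgt
  · exact main_oriented k X Y a b h1 hle
  · have h2' : (X - Y).val ≤ 10 * k := by omega
    have hswap : (s((X, a), (Y, b)) : Sym2 (HOPVertex (N k))) = s((Y, b), (X, a)) :=
      Sym2.eq_swap
    rw [hswap]
    exact main_oriented k Y X b a h1' h2'

end HOP69

theorem hop_C2_C4_C4_mod_one (k n s : ℕ) (hk : 1 ≤ k) (hn : n = 20 * k + 1)
    (hs : s = n - 10) :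
    HOPSolution n s 3 ![2, 4, 4] := by
  subst hn
  subst hs
  refine ⟨4 * k * (20 * k + 1), ?_, ?_⟩
  · have hsum : (∑ i, (![2, 4, 4] : Fin 3 → ℕ) i) = 10 := by
      rw [Fin.sum_univ_three]; rfl
    rw [hsum]
    have h20 : 20 * k + 1 - 1 = 20 * k := by omega
    rw [h20]
    ring
  · have hcard : Fintype.card (Fin (4 * k * (20 * k + 1)))
        = Fintype.card (Fin k × Fin 4 × ZMod (HOP69.N k)) := by
      simp [Fintype.card_prod, ZMod.card, HOP69.N]
      ring
    set eqv := Fintype.equivOfCardEq hcard with heqv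
    refine ⟨fun i => HOP69.theFactor k (eqv i).1 (eqv i).2.1 (eqv i).2.2, ?_⟩
    intro e hdg hI
    obtain ⟨p, hp, hup⟩ := HOP69.main k hk e hdg hI
    refine ⟨eqv.symm p, ?_, ?_⟩
    · show e ∈ (HOP69.theFactor k (eqv (eqv.symm p)).1 (eqv (eqv.symm p)).2.1
        (eqv (eqv.symm p)).2.2).edges
      rw [Equiv.apply_symm_apply]
      exact hp
    · intro y hy
      have hy' : e ∈ (HOP69.theFactor k (eqv y).1 (eqv y).2.1 (eqv y).2.2).edges := hy
      have hyy := hup (eqv y) hy'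
      rw [← hyy, Equiv.symm_apply_apply]
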